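/- For every natural number n and every a < 2^n, the period of a + 2^n in A_{n+1} equals the period of a in A_n: p_{n+1}(a + 2^n) = p_n(a). -/

import Mathlib

open Fin.NatCast

/-- The unique left self-distributive operation on `Fin (2^m)` with `a * 1 = a + 1`. -/
def IsCyclicLD (m : ℕ) (op : Fin (2^m) → Fin (2^m) → Fin (2^m)) : Prop :=
  (∀ a b c, op a (op b c) = op (op a b) (op a c)) ∧ ∀ a, op a 1 = a + 1

/-- The period `p_m(a)`: the least positive `p` with `a * (p mod 2^m) = 0`. -/
noncomputable def period (m : ℕ) (op : Fin (2^m) → Fin (2^m) → Fin (2^m))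
    (a : Fin (2^m)) : ℕ :=
  sInf {p : ℕ | 0 < p ∧ op a ((p : ℕ) : Fin (2^m)) = 0}


section Basic
variable {m : ℕ} {op : Fin (2^m) → Fin (2^m) → Fin (2^m)}

lemma ld_rec (h : IsCyclicLD m op) (a b : Fin (2^m)) :
    op a (b + 1) = op (op a b) (a + 1) := by
  have := h.1 a b 1
  rwa [h.2, h.2] at this

lemma cast_succ_eq (k : ℕ) : ((k+1 : ℕ) : Fin (2^m)) = ((k : ℕ) : Fin (2^m)) + 1 := by
  push_cast; ring

lemma ld_zero_row (h : IsCyclicLD m op) (b : Fin (2^m)) : op 0 b = b := by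
  have base : ∀ k : ℕ, op 0 ((k+1 : ℕ) : Fin (2^m)) = ((k+1 : ℕ) : Fin (2^m)) := by
    intro k
    induction k with
    | zero => simpa using h.2 0
    | succ k ih =>
      rw [cast_succ_eq (k+1), ld_rec h, ih, zero_add, h.2, ← cast_succ_eq (k+1)]
  rcases Nat.eq_zero_or_pos b.val with hb | hb
  · have hb0 : b = 0 := by
      apply Fin.ext; simpa using hb
    have h1 : ((2^m - 1 + 1 : ℕ) : Fin (2^m)) = 0 := by
      have he : (2^m - 1 + 1 : ℕ) = 2^m := by have := Nat.two_pow_pos m; omega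
      rw [he, Fin.natCast_self]
    have := base (2^m - 1)
    rw [h1] at this
    rw [hb0]
    exact this
  · obtain ⟨j, hj⟩ : ∃ j, b.val = j + 1 := ⟨b.val - 1, by omega⟩
    have hb' : b = ((j+1 : ℕ) : Fin (2^m)) := by rw [← hj, Fin.cast_val_eq_self]
    rw [hb', base]

lemma succ_cases (a : Fin (2^m)) : a + 1 = 0 ∨ a.val < (a + 1).val := by
  have e : a + 1 = ((a.val + 1 : ℕ) : Fin (2^m)) := by
    rw [Nat.cast_add, Fin.cast_val_eq_self, Nat.cast_one]
  have hv : (a + 1).val = (a.val + 1) % 2^m := by rw [e, Fin.val_natCast]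
  rcases eq_or_ne (a + 1) 0 with h0 | h0
  · exact Or.inl h0
  · right
    have ha := a.isLt
    have hne : (a.val + 1) % 2^m ≠ 0 := by
      intro hz
      apply h0
      apply Fin.ext
      rw [hv, hz]
      simp
    have hlt : a.val + 1 < 2^m := by
      by_contra hge
      have he : a.val + 1 = 2^m := by omega
      rw [he, Nat.mod_self] at hne
      exact hne rfl
    rw [hv, Nat.mod_eq_of_lt hlt]
    omega

lemma ld_row_gt (h : IsCyclicLD m op) :
    ∀ (a b : Fin (2^m)), b ≠ 0 → op a b = 0 ∨ a.val < (op a b).val := by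
  have key : ∀ d, ∀ a : Fin (2^m), 2^m - a.val ≤ d → ∀ k : ℕ,
      op a ((k+1:ℕ) : Fin (2^m)) = 0 ∨ a.val < (op a ((k+1:ℕ) : Fin (2^m))).val := by
    intro d
    induction d using Nat.strong_induction_on with
    | _ d ih =>
      intro a ha k
      induction k with
      | zero =>
        have h1 : ((0+1:ℕ) : Fin (2^m)) = 1 := by norm_num
        rw [h1, h.2]
        exact succ_cases a
      | succ k ihk =>
        rw [cast_succ_eq (k+1), ld_rec h]
        rcases ihk with hc | hc
        · rw [hc, ld_zero_row h]
          exact succ_cases a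
        · set c := op a ((k+1:ℕ) : Fin (2^m)) with hcdef
          have hclt := c.isLt
          have hd : 2^m - c.val < d := by omega
          have e : a + 1 = ((a.val + 1 : ℕ) : Fin (2^m)) := by
            rw [Nat.cast_add, Fin.cast_val_eq_self, Nat.cast_one]
          have := ih (2^m - c.val) hd c le_rfl a.val
          rw [← e] at this
          rcases this with h3 | h3
          · exact Or.inl h3
          · exact Or.inr (lt_trans hc h3)
  intro a b hb
  obtain ⟨j, hj⟩ : ∃ j, b.val = j + 1 := by
    refine ⟨b.val - 1, ?_⟩
    have : b.val ≠ 0 := fun hz => hb (Fin.ext (by simpa using hz))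
    omega
  have hb' : b = ((j+1 : ℕ) : Fin (2^m)) := by rw [← hj, Fin.cast_val_eq_self]
  rw [hb']
  exact key (2^m) a (by omega) j

end Basic

section ZeroCol
variable {m : ℕ} {op : Fin (2^m) → Fin (2^m) → Fin (2^m)}

lemma ld_zero_col (h : IsCyclicLD m op) (a : Fin (2^m)) : op a 0 = 0 := by
  have hMpos : 0 < 2^m := Nat.two_pow_pos m
  have hcast0 : ((2^m : ℕ) : Fin (2^m)) = 0 := Fin.natCast_self _
  -- reduce goal to c (2^m) = 0 where c k = op a (k : Fin)
  set c : ℕ → Fin (2^m) := fun k => op a ((k : ℕ) : Fin (2^m)) with hcdef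
  have hgoal : c (2^m) = op a 0 := by simp only [hcdef, hcast0]
  have hrec : ∀ k, c (k+1) = op (c k) (a + 1) := by
    intro k
    simp only [hcdef]
    rw [cast_succ_eq k, ld_rec h]
  have hc1 : c 1 = a + 1 := by
    simp only [hcdef, Nat.cast_one]
    exact h.2 a
  rcases eq_or_ne (a + 1) 0 with htop | htop
  · -- top row: everything from index 1 on is 0
    have hrow : ∀ k : ℕ, c (k+1) = 0 := by
      intro k
      induction k with
      | zero => rw [hc1]; exact htop
      | succ k ih => rw [hrec, ih, htop, ld_zero_row h]
    rw [← hgoal]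
    have he : (2^m - 1) + 1 = 2^m := by omega
    have := hrow (2^m - 1)
    rwa [he] at this
  · -- general row
    have hstep : ∀ k, c k ≠ 0 → c (k+1) = 0 ∨ (c k).val < (c (k+1)).val := by
      intro k hk
      rw [hrec]
      exact ld_row_gt h (c k) (a+1) htop
    have hperM : ∀ t, c (t + 2^m) = c t := by
      intro t
      simp only [hcdef]
      congr 1
      rw [Nat.cast_add, hcast0, add_zero]
    -- existence of a zero in [1, 2^m]
    have hex : ∃ k, (1 ≤ k ∧ c k = 0) := by
      by_contra hno
      push_neg at hno
      -- then every c k with 1 ≤ k is nonzero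
      have grow : ∀ t, t ≤ (c (t+1)).val := by
        intro t
        induction t with
        | zero => exact Nat.zero_le _
        | succ t ih =>
          have h1 : c (t+1) ≠ 0 := hno (t+1) (by omega)
          rcases hstep (t+1) h1 with h2 | h2
          · exact absurd h2 (hno (t+2) (by omega))
          · omega
      have := grow (2^m)
      have := (c (2^m + 1)).isLt
      omega
    set k₀ := Nat.find hex with hk₀def
    obtain ⟨hk₀pos, hk₀zero⟩ := Nat.find_spec hex
    have hmin : ∀ j, j < k₀ → 1 ≤ j → c j ≠ 0 := by
      intro j hj h1j hz
      exact Nat.find_min hex hj ⟨h1j, hz⟩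
    -- shift periodicity with period k₀ (for indices ≥ 1)
    have hshift : ∀ t, c (1 + t + k₀) = c (1 + t) := by
      intro t
      induction t with
      | zero =>
        have : 1 + 0 + k₀ = k₀ + 1 := by ring
        rw [this, hrec, hk₀zero, ld_zero_row h]
        simpa using hc1.symm
      | succ t ih =>
        have e : 1 + (t+1) + k₀ = (1 + t + k₀) + 1 := by ring
        have e2 : 1 + (t+1) = (1 + t) + 1 := by ring
        rw [e, hrec, ih, ← hrec, ← e2]
    have hshift' : ∀ q t, c (1 + t + q * k₀) = c (1 + t) := by
      intro q
      induction q with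
      | zero => intro t; simp
      | succ q ih =>
        intro t
        have e : 1 + t + (q+1) * k₀ = 1 + (t + q * k₀) + k₀ := by ring
        rw [e, hshift, ← Nat.add_assoc, ih]
    -- strict increase before k₀
    have hinc : ∀ t, 1 + t < k₀ → (c 1).val + t ≤ (c (1 + t)).val := by
      intro t
      induction t with
      | zero => simp
      | succ t ih =>
        intro ht
        have h1 : c (1 + t) ≠ 0 := hmin (1+t) (by omega) (by omega)
        rcases hstep (1+t) h1 with h2 | h2
        · exact absurd h2 (hmin (1+t+1) (by omega) (by omega))
        · have := ih (by omega)
          have e : 1 + (t+1) = (1 + t) + 1 := by ring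
          rw [e]
          omega
    -- k₀ ≤ 2^m
    have hk₀le : k₀ ≤ 2^m := by
      by_contra hgt
      push_neg at hgt
      have h1 := hinc (2^m - 1) (by omega)
      have h2 := (c (1 + (2^m - 1))).isLt
      have h3 : (c 1).val = 0 := by omega
      have h4 : c 1 = 0 := Fin.ext (by simpa using h3)
      rw [hc1] at h4
      exact htop h4
    -- divisibility: 2^m % k₀ = 0
    have hper1 : c (1 + 2^m) = c 1 := hperM 1
    set r := 2^m % k₀ with hrdef
    have hdecomp : 2^m = r + (2^m / k₀) * k₀ := by
      have h1 := Nat.mod_add_div (2^m) k₀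
      have h2 : k₀ * (2^m / k₀) = (2^m / k₀) * k₀ := Nat.mul_comm _ _
      omega
    have hcr : c (1 + r) = c 1 := by
      have e : 1 + r + (2^m / k₀) * k₀ = 1 + 2^m := by omega
      have := hshift' (2^m / k₀) r
      rw [e] at this
      rw [← this, hper1]
    have hrlt : r < k₀ := Nat.mod_lt _ (by omega)
    have hr0 : r = 0 := by
      by_contra hr
      rcases Nat.lt_or_ge (1 + r) k₀ with hlt | hge
      · have := hinc r hlt
        rw [hcr] at this
        omega
      · have he : 1 + r = k₀ := by omega
        rw [he, hk₀zero] at hcr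
        rw [hc1] at hcr
        exact htop hcr.symm
    -- conclude c (2^m) = 0
    have hmulzero : ∀ q, c ((q+1) * k₀) = 0 := by
      intro q
      induction q with
      | zero => simpa using hk₀zero
      | succ q ih =>
        have hke : 1 ≤ (q+1) * k₀ :=
          Nat.one_le_iff_ne_zero.mpr (Nat.mul_ne_zero (by omega) (by omega))
        have e : (q+1+1) * k₀ = 1 + ((q+1) * k₀ - 1) + k₀ := by
          have h1 : (q+1+1) * k₀ = (q+1) * k₀ + k₀ := by ring
          omega
        rw [e, hshift]
        have e2 : 1 + ((q+1) * k₀ - 1) = (q+1) * k₀ := by omega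
        rw [e2, ih]
    have hq : 2^m = (2^m / k₀) * k₀ := by omega
    have hqpos : 1 ≤ 2^m / k₀ :=
      (Nat.one_le_div_iff (by omega)).mpr hk₀le
    rw [← hgoal]
    have hz := hmulzero (2^m / k₀ - 1)
    have e3 : (2^m / k₀ - 1 + 1) * k₀ = 2^m := by
      have h1 : 2^m / k₀ - 1 + 1 = 2^m / k₀ := by omega
      rw [h1]
      exact hq.symm
    rwa [e3] at hz

end ZeroCol

section Hom
variable {n : ℕ}

/-- Reduction mod `2^n` from `Fin (2^(n+1))` to `Fin (2^n)`. -/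
def proj (n : ℕ) (x : Fin (2^(n+1))) : Fin (2^n) := ((x.val : ℕ) : Fin (2^n))

lemma proj_natCast (k : ℕ) : proj n ((k : ℕ) : Fin (2^(n+1))) = ((k : ℕ) : Fin (2^n)) := by
  apply Fin.ext
  simp only [proj, Fin.val_natCast]
  exact Nat.mod_mod_of_dvd k (by rw [pow_succ]; exact Dvd.intro 2 rfl)

lemma proj_zero : proj n (0 : Fin (2^(n+1))) = 0 := by
  simp [proj]

lemma proj_add_one (x : Fin (2^(n+1))) : proj n (x + 1) = proj n x + 1 := by
  have e : x + 1 = ((x.val + 1 : ℕ) : Fin (2^(n+1))) := by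
    rw [Nat.cast_add, Fin.cast_val_eq_self, Nat.cast_one]
  rw [e, proj_natCast, Nat.cast_add, Nat.cast_one]
  rfl

variable {op₀ : Fin (2^n) → Fin (2^n) → Fin (2^n)}
variable {op₁ : Fin (2^(n+1)) → Fin (2^(n+1)) → Fin (2^(n+1))}

lemma ld_hom (h0 : IsCyclicLD n op₀) (h1 : IsCyclicLD (n+1) op₁) (a b : Fin (2^(n+1))) :
    proj n (op₁ a b) = op₀ (proj n a) (proj n b) := by
  have key : ∀ d, ∀ a : Fin (2^(n+1)), 2^(n+1) - a.val ≤ d → ∀ k : ℕ,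
      proj n (op₁ a ((k : ℕ) : Fin (2^(n+1)))) = op₀ (proj n a) ((k : ℕ) : Fin (2^n)) := by
    intro d
    induction d using Nat.strong_induction_on with
    | _ d ih =>
      intro a ha k
      induction k with
      | zero =>
        rw [Nat.cast_zero, Nat.cast_zero, ld_zero_col h1, ld_zero_col h0, proj_zero]
      | succ k ihk =>
        rw [cast_succ_eq k, ld_rec h1, cast_succ_eq k, ld_rec h0, ← ihk, ← proj_add_one]
        set c := op₁ a ((k : ℕ) : Fin (2^(n+1))) with hcdef
        -- goal : proj n (op₁ c (a+1)) = op₀ (proj n c) (proj n (a+1))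
        rcases eq_or_ne c 0 with hc | hc
        · rw [hc, ld_zero_row h1, proj_zero, ld_zero_row h0]
        · have hk0 : ((k : ℕ) : Fin (2^(n+1))) ≠ 0 := by
            intro hz
            rw [hz, ld_zero_col h1] at hcdef
            exact hc hcdef
          have hcgt : a.val < c.val := by
            rcases ld_row_gt h1 a ((k : ℕ) : Fin (2^(n+1))) hk0 with h' | h'
            · exact absurd (hcdef.trans h') hc
            · rw [← hcdef] at h'
              exact h'
          have hd : 2^(n+1) - c.val < d := by
            have := c.isLt
            omega
          have := ih (2^(n+1) - c.val) hd c le_rfl ((a+1).val)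
          rw [Fin.cast_val_eq_self] at this
          exact this
  have hb : b = ((b.val : ℕ) : Fin (2^(n+1))) := (Fin.cast_val_eq_self b).symm
  rw [hb]
  have := key (2^(n+1)) a (by omega) b.val
  rw [this, proj_natCast]

end Hom

theorem period_add_pow' (n : ℕ) (a : ℕ) (ha : a < 2^n)
    (op₀ : Fin (2^n) → Fin (2^n) → Fin (2^n)) (hop₀ : IsCyclicLD n op₀)
    (op₁ : Fin (2^(n+1)) → Fin (2^(n+1)) → Fin (2^(n+1))) (hop₁ : IsCyclicLD (n+1) op₁) :
    (sInf {p : ℕ | 0 < p ∧ op₁ ((a + 2^n : ℕ) : Fin (2^(n+1))) ((p : ℕ) : Fin (2^(n+1))) = 0}) =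
    (sInf {p : ℕ | 0 < p ∧ op₀ ((a : ℕ) : Fin (2^n)) ((p : ℕ) : Fin (2^n)) = 0}) := by
  set A : Fin (2^(n+1)) := ((a + 2^n : ℕ) : Fin (2^(n+1))) with hA
  have hAval : A.val = a + 2^n := by
    rw [hA, Fin.val_natCast]
    apply Nat.mod_eq_of_lt
    rw [pow_succ]
    omega
  have hprojA : proj n A = ((a : ℕ) : Fin (2^n)) := by
    rw [hA, proj_natCast, Nat.cast_add, Fin.natCast_self, add_zero]
  congr 1
  ext p
  simp only [Set.mem_setOf_eq]
  constructor
  · rintro ⟨hp, hz⟩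
    refine ⟨hp, ?_⟩
    have := ld_hom hop₀ hop₁ A ((p : ℕ) : Fin (2^(n+1)))
    rw [hz, proj_zero, hprojA, proj_natCast] at this
    exact this.symm
  · rintro ⟨hp, hz⟩
    refine ⟨hp, ?_⟩
    have hhom := ld_hom hop₀ hop₁ A ((p : ℕ) : Fin (2^(n+1)))
    rw [hprojA, proj_natCast, hz] at hhom
    -- hhom : proj n (op₁ A (p cast)) = 0
    rcases eq_or_ne ((p : ℕ) : Fin (2^(n+1))) 0 with hp0 | hp0
    · rw [hp0, ld_zero_col hop₁]
    · rcases ld_row_gt hop₁ A ((p : ℕ) : Fin (2^(n+1))) hp0 with h' | h'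
      · exact h'
      · exfalso
        set v := (op₁ A ((p : ℕ) : Fin (2^(n+1)))).val with hv
        have hvlt : v < 2^(n+1) := (op₁ A _).isLt
        have hvmod : v % 2^n = 0 := by
          have : ((v : ℕ) : Fin (2^n)) = 0 := hhom
          have := congrArg Fin.val this
          rwa [Fin.val_natCast, Fin.val_zero] at this
        have hdvd : 2^n ∣ v := Nat.dvd_of_mod_eq_zero hvmod
        obtain ⟨q, hq⟩ := hdvd
        rw [hAval] at h'
        have h2 : 2^(n+1) = 2^n * 2 := by rw [pow_succ]
        -- v > a + 2^n ≥ 2^n, v < 2^n * 2, v = 2^n * q : impossible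
        have hqlt : q < 2 := by
          by_contra hge
          push_neg at hge
          have : 2^n * 2 ≤ 2^n * q := Nat.mul_le_mul_left _ hge
          omega
        interval_cases q <;> omega


/-- for `a < 2^n`, `p_{n+1}(a + 2^n) = p_n(a)`. -/
theorem period_add_pow (n : ℕ) (a : ℕ) (ha : a < 2^n)
    (op₀ : Fin (2^n) → Fin (2^n) → Fin (2^n)) (hop₀ : IsCyclicLD n op₀)
    (op₁ : Fin (2^(n+1)) → Fin (2^(n+1)) → Fin (2^(n+1))) (hop₁ : IsCyclicLD (n+1) op₁) :
    period (n+1) op₁ ((a + 2^n : ℕ) : Fin (2^(n+1))) = period n op₀ ((a : ℕ) : Fin (2^n)) := by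
  unfold period
  exact period_add_pow' n a ha op₀ hop₀ op₁ hop₁
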